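/- arXiv:2106.13826 — 2 statements merged into one kernel-verified Lean document; each statement's English description precedes it below -/
import Mathlib

section
/- Let Z be a zone of a finite Σ°-labeled graph such that Z contains no directed cycle among its included edges. If every bad vertex of Z is relabeled with ⊥, then the resulting rooted graph is isomorphic to the term encoding t° of some linear term t over Σ. -/
open CategoryTheory
open Classical

noncomputable section

/-- Labeled graphs over a label type `W`. -/
structure LGraph (W : Type) : Type 1 where
  V : Type
  E : Type
  src : E → V
  tgt : E → V
  lV : V → W
  lE : E → W

section Cat

variable {W : Type} [Preorder W]

/-- Label-nondecreasing graph premorphisms: the morphisms of the category `Graph^(L,≤)`. -/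
structure GLHom (G H : LGraph W) : Type where
  onV : G.V → H.V
  onE : G.E → H.E
  src_comm : ∀ e, H.src (onE e) = onV (G.src e)
  tgt_comm : ∀ e, H.tgt (onE e) = onV (G.tgt e)
  lV_le : ∀ v, G.lV v ≤ H.lV (onV v)
  lE_le : ∀ e, G.lE e ≤ H.lE (onE e)

theorem GLHom.ext' {G H : LGraph W} {f g : GLHom G H}
    (h1 : f.onV = g.onV) (h2 : f.onE = g.onE) : f = g := by
  cases f; cases g
  cases h1; cases h2
  rfl

/-- The category `Graph^(L,≤)` of labeled graphs over a preordered label set. -/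
instance : Category (LGraph W) where
  Hom G H := GLHom G H
  id G := { onV := id, onE := id, src_comm := fun _ => rfl, tgt_comm := fun _ => rfl,
            lV_le := fun _ => le_refl _, lE_le := fun _ => le_refl _ }
  comp f g :=
    { onV := g.onV ∘ f.onV
      onE := g.onE ∘ f.onE
      src_comm := fun e => by
        simp only [Function.comp_apply, g.src_comm, f.src_comm]
      tgt_comm := fun e => by
        simp only [Function.comp_apply, g.tgt_comm, f.tgt_comm]
      lV_le := fun v => le_trans (f.lV_le v) (g.lV_le _)
      lE_le := fun e => le_trans (f.lE_le e) (g.lE_le _) }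
  id_comp f := GLHom.ext' rfl rfl
  comp_id f := GLHom.ext' rfl rfl
  assoc f g h := GLHom.ext' rfl rfl

/-- Vertex map of a morphism. -/
abbrev homV {G H : LGraph W} (f : G ⟶ H) : G.V → H.V := GLHom.onV f

/-- Edge map of a morphism. -/
abbrev homE {G H : LGraph W} (f : G ⟶ H) : G.E → H.E := GLHom.onE f

end Cat

/-- A graph is finite if it has finitely many vertices and edges. -/
def FiniteG {W : Type} (G : LGraph W) : Prop := Finite G.V ∧ Finite G.E
/-- The flat lattice on a base label set `A`: a global minimum `⊥`, a global
maximum `⊤`, and all elements of `A` pairwise incomparable. -/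
inductive Flat (A : Type) : Type
  | bot : Flat A
  | el : A → Flat A
  | top : Flat A

namespace Flat

def le {A : Type} : Flat A → Flat A → Prop
  | bot, _ => True
  | _, top => True
  | el a, el b => a = b
  | _, _ => False

instance (A : Type) : Preorder (Flat A) where
  le := Flat.le
  le_refl a := by cases a <;> trivial
  le_trans a b c hab hbc := by
    cases a <;> cases b <;> cases c <;> simp_all [Flat.le]

theorem bot_le {A : Type} (a : Flat A) : (Flat.bot : Flat A) ≤ a := by
  show Flat.le Flat.bot a
  cases a <;> trivial

theorem le_top {A : Type} (a : Flat A) : a ≤ (Flat.top : Flat A) := by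
  show Flat.le a Flat.top
  cases a <;> trivial

theorem le_cases {A : Type} {a b : Flat A} (h : a = Flat.bot ∨ b = Flat.top) : a ≤ b := by
  rcases h with h | h
  · subst h; exact bot_le _
  · subst h; exact le_top _

end Flat

/-- The flat lattice `Σ°` induced by a signature `S` together with the
positive natural numbers (used as edge labels). -/
abbrev FlatL (S : Type) := Flat (S ⊕ ℕ+)
/-- First-order terms over a signature `S` with arity function `ar` and
variable set `X`. -/
inductive Term (S : Type) (ar : S → ℕ) (X : Type) : Type
  | var : X → Term S ar X
  | app : (f : S) → (Fin (ar f) → Term S ar X) → Term S ar X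

namespace Term

variable {S : Type} {ar : S → ℕ} {X : Type}

/-- The subterm of `t` at a position (a list of (0-based) child indices),
if the position exists in `t`. -/
def sub? : Term S ar X → List ℕ → Option (Term S ar X)
  | t, [] => some t
  | .var _, _ :: _ => none
  | .app f ts, i :: p => if h : i < ar f then sub? (ts ⟨i, h⟩) p else none

/-- The set of variables occurring in a term. -/
def vars (t : Term S ar X) : Set X := {x | ∃ p, t.sub? p = some (.var x)}

/-- A term is linear if every variable occurs at most once in it. -/
def Linear (t : Term S ar X) : Prop :=
  ∀ x p q, t.sub? p = some (.var x) → t.sub? q = some (.var x) → p = q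

/-- The head symbol of a term, if any. -/
def head? : Term S ar X → Option S
  | .var _ => none
  | .app f _ => some f

/-- The function symbol at position `p` of `t`, if any. -/
def symAt (t : Term S ar X) (p : List ℕ) : Option S := (t.sub? p).bind head?

theorem sub?_append (t : Term S ar X) (p q : List ℕ) :
    t.sub? (p ++ q) = (t.sub? p).bind (fun s => s.sub? q) := by
  induction p generalizing t with
  | nil => simp [sub?]
  | cons i p ih =>
    cases t with
    | var x => simp [sub?]
    | app f ts =>
      show sub? (.app f ts) (i :: (p ++ q)) = _
      simp only [sub?]
      by_cases h : i < ar f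
      · simp [h, ih]
      · simp [h]

theorem symAt_sub (t : Term S ar X) {p : List ℕ} {f : S} (h : t.symAt p = some f) :
    ∃ ts : Fin (ar f) → Term S ar X, t.sub? p = some (.app f ts) := by
  unfold symAt at h
  cases hs : t.sub? p with
  | none => rw [hs] at h; simp at h
  | some s =>
    rw [hs] at h
    cases s with
    | var x => simp [head?] at h
    | app g ts =>
      simp [head?] at h
      subst h
      exact ⟨ts, rfl⟩

theorem edge_sub?_isSome (t : Term S ar X) {p : List ℕ} {i : ℕ}
    (h : ∃ f, t.symAt p = some f ∧ i < ar f) :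
    ∃ s, t.sub? (p ++ [i]) = some s := by
  obtain ⟨f, hf, hi⟩ := h
  obtain ⟨ts, hts⟩ := t.symAt_sub hf
  refine ⟨ts ⟨i, hi⟩, ?_⟩
  rw [sub?_append, hts]
  simp [sub?, hi]

theorem edge_tgt_var (t : Term S ar X) {p : List ℕ} {i : ℕ}
    (h : ∃ f, t.symAt p = some f ∧ i < ar f)
    (hn : ¬ (t.symAt (p ++ [i])).isSome) :
    ∃ x, t.sub? (p ++ [i]) = some (.var x) := by
  obtain ⟨s, hs⟩ := t.edge_sub?_isSome h
  cases s with
  | var x => exact ⟨x, hs⟩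
  | app g ts => exact absurd (by simp [symAt, hs, head?]) hn

theorem root_var (t : Term S ar X) (h : ¬ (t.symAt []).isSome) :
    ∃ x, t.sub? [] = some (.var x) := by
  cases t with
  | var x => exact ⟨x, rfl⟩
  | app f ts => exact absurd (by simp [symAt, sub?, head?]) h

/-- Vertices of the term encoding: symbol vertices (named by their position)
and variable heads (named by their variable). -/
def encV (t : Term S ar X) : Type :=
  {p : List ℕ // (t.symAt p).isSome} ⊕ {x : X // x ∈ t.vars}

/-- Edges of the term encoding: pairs of a symbol position and a child index. -/
def encE (t : Term S ar X) : Type :=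
  {pi : List ℕ × ℕ // ∃ f, t.symAt pi.1 = some f ∧ pi.2 < ar f}

/-- Target of an edge of the term encoding. -/
noncomputable def encTgt (t : Term S ar X) (e : t.encE) : t.encV :=
  if h : (t.symAt (e.1.1 ++ [e.1.2])).isSome then Sum.inl ⟨e.1.1 ++ [e.1.2], h⟩
  else Sum.inr ⟨Classical.choose (t.edge_tgt_var e.2 h),
    ⟨e.1.1 ++ [e.1.2], Classical.choose_spec (t.edge_tgt_var e.2 h)⟩⟩

/-- The term encoding `t°` of a term `t` as a `Σ°`-labeled graph. -/
noncomputable def enc (t : Term S ar X) : LGraph (FlatL S) where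
  V := t.encV
  E := t.encE
  src e := Sum.inl ⟨e.1.1, by obtain ⟨f, hf, _⟩ := e.2; simp [hf]⟩
  tgt := t.encTgt
  lV v := match v with
    | .inl q => (t.symAt q.1).elim Flat.bot (fun f => Flat.el (Sum.inl f))
    | .inr _ => Flat.bot
  lE e := Flat.el (Sum.inr ⟨e.1.2 + 1, Nat.succ_pos _⟩)

/-- The root of the term encoding (the vertex at position `ε`). -/
noncomputable def encRoot (t : Term S ar X) : t.encV :=
  if h : (t.symAt []).isSome then Sum.inl ⟨[], h⟩
  else Sum.inr ⟨Classical.choose (t.root_var h), ⟨[], Classical.choose_spec (t.root_var h)⟩⟩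

/-- `t.encVertAt p v` says that `v` is the vertex at position `p` in the term
encoding `t°`. -/
def encVertAt (t : Term S ar X) (p : List ℕ) : t.encV → Prop
  | .inl q => q.1 = p
  | .inr x => t.sub? p = some (.var x.1)

/-- The set of variable heads of a term encoding. -/
def varHeads (t : Term S ar X) : Set t.encV := Set.range Sum.inr

/-- Applying a substitution to a term. -/
def subst (σ : X → Term S ar X) : Term S ar X → Term S ar X
  | .var x => σ x
  | .app f ts => .app f (fun i => subst σ (ts i))

end Term

/-- One-hole contexts over a signature. `app f i ts C` is the context
`f(ts 0, …, C, …, ts (n-1))` with `C` at argument position `i`. -/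
inductive Ctx (S : Type) (ar : S → ℕ) (X : Type) : Type
  | hole : Ctx S ar X
  | app : (f : S) → (i : Fin (ar f)) → (Fin (ar f) → Term S ar X) → Ctx S ar X → Ctx S ar X

namespace Ctx

variable {S : Type} {ar : S → ℕ} {X : Type}

/-- Replacing the hole of a context by a term. -/
def fill : Ctx S ar X → Term S ar X → Term S ar X
  | .hole, t => t
  | .app f i ts C, t => .app f (Function.update ts i (C.fill t))

/-- The position of the hole of a context. -/
def holePos : Ctx S ar X → List ℕ
  | .hole => []
  | .app _ i _ C => (i : ℕ) :: C.holePos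

end Ctx

/-- A term rewrite rule `lhs → rhs`: `lhs` is not a variable and all variables
of `rhs` occur in `lhs`. -/
structure TRSRule (S : Type) (ar : S → ℕ) (X : Type) : Type where
  lhs : Term S ar X
  rhs : Term S ar X
  lhs_not_var : ∀ x, lhs ≠ Term.var x
  var_cond : rhs.vars ⊆ lhs.vars

namespace TRSRule

variable {S : Type} {ar : S → ℕ} {X : Type}

/-- A rule is linear if both sides are linear terms. -/
def Linear (ρ : TRSRule S ar X) : Prop := ρ.lhs.Linear ∧ ρ.rhs.Linear

/-- The rewrite step relation generated by a single rule. -/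
def Step (ρ : TRSRule S ar X) (s t : Term S ar X) : Prop :=
  ∃ (C : Ctx S ar X) (σ : X → Term S ar X),
    s = C.fill (ρ.lhs.subst σ) ∧ t = C.fill (ρ.rhs.subst σ)

/-- The rewrite step relation of a rule at a fixed position `p`. -/
def StepAt (ρ : TRSRule S ar X) (p : List ℕ) (s t : Term S ar X) : Prop :=
  ∃ (C : Ctx S ar X) (σ : X → Term S ar X),
    C.holePos = p ∧ s = C.fill (ρ.lhs.subst σ) ∧ t = C.fill (ρ.rhs.subst σ)

end TRSRule

/-- The rewrite relation of a term rewriting system. -/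
def TStep {S : Type} {ar : S → ℕ} {X : Type} (Rs : Set (TRSRule S ar X))
    (s t : Term S ar X) : Prop :=
  ∃ ρ ∈ Rs, ρ.Step s t
section Closures

variable {A : Type}

/-- Upper context closure `C[G]` of a graph rooted at `r`: adds a `⊤`-labeled
context vertex with a `⊤`-labeled edge to the root and a `⊤`-labeled loop. -/
def upperCC (G : LGraph (Flat A)) (r : G.V) : LGraph (Flat A) where
  V := G.V ⊕ Unit
  E := G.E ⊕ Bool
  src e := match e with
    | .inl e => .inl (G.src e)
    | .inr _ => .inr ()
  tgt e := match e with
    | .inl e => .inl (G.tgt e)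
    | .inr true => .inl r
    | .inr false => .inr ()
  lV v := match v with
    | .inl v => G.lV v
    | .inr _ => Flat.top
  lE e := match e with
    | .inl e => G.lE e
    | .inr _ => Flat.top

/-- Lower context closure `G↓_Xs`: relabels every vertex in `Xs` to `⊤` and
adds for it a fresh `⊤`-labeled vertex `x'` with a `⊤`-labeled edge `x → x'`
and a `⊤`-labeled loop on `x'`. -/
noncomputable def lowerCC (G : LGraph (Flat A)) (Xs : Set G.V) : LGraph (Flat A) where
  V := G.V ⊕ Xs
  E := G.E ⊕ (Xs ⊕ Xs)
  src e := match e with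
    | .inl e => .inl (G.src e)
    | .inr (.inl x) => .inl x.1
    | .inr (.inr x) => .inr x
  tgt e := match e with
    | .inl e => .inl (G.tgt e)
    | .inr (.inl x) => .inr x
    | .inr (.inr x) => .inr x
  lV v := match v with
    | .inl v => if v ∈ Xs then Flat.top else G.lV v
    | .inr _ => Flat.top
  lE e := match e with
    | .inl e => G.lE e
    | .inr _ => Flat.top

/-- The context closure `C[G↓_Xs]` of a rooted graph. -/
noncomputable def ctxCC (G : LGraph (Flat A)) (r : G.V) (Xs : Set G.V) : LGraph (Flat A) :=
  upperCC (lowerCC G Xs) (Sum.inl r)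

theorem ctxCC_lV_inl (G : LGraph (Flat A)) (r : G.V) (Xs : Set G.V) (v : G.V) :
    (ctxCC G r Xs).lV (Sum.inl (Sum.inl v)) = if v ∈ Xs then Flat.top else G.lV v := rfl

/-- The typing morphism `G ↣ C[G↓_Xs]` (an inclusion). -/
noncomputable def tCC (G : LGraph (Flat A)) (r : G.V) (Xs : Set G.V) :
    GLHom G (ctxCC G r Xs) where
  onV v := Sum.inl (Sum.inl v)
  onE e := Sum.inl (Sum.inl e)
  src_comm e := rfl
  tgt_comm e := rfl
  lV_le v := by
    rw [ctxCC_lV_inl]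
    split
    · exact Flat.le_top _
    · exact le_refl _
  lE_le e := le_refl _

end Closures

/-- The interface graph `I(t)` of a term `t`: a discrete graph with
`⊥`-labeled vertices `Var(t) ∪ {ε}`. -/
def interfaceG {S : Type} {ar : S → ℕ} {X : Type} (t : Term S ar X) : LGraph (FlatL S) where
  V := {x : X // x ∈ t.vars} ⊕ Unit
  E := Empty
  src e := e.elim
  tgt e := e.elim
  lV _ := Flat.bot
  lE e := e.elim

/-- The variable vertices of an interface graph. -/
def interfaceVars {S : Type} {ar : S → ℕ} {X : Type} (t : Term S ar X) :
    Set (interfaceG t).V := Set.range Sum.inl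
/-- A PBPO⁺ rewrite rule. -/
structure PBPORule (W : Type) [Preorder W] : Type 1 where
  L : LGraph W
  K : LGraph W
  R : LGraph W
  L' : LGraph W
  K' : LGraph W
  l : K ⟶ L
  r : K ⟶ R
  l' : K' ⟶ L'
  tL : L ⟶ L'
  tK : K ⟶ K'

/-- A PBPO⁺ rewrite step `G_L ⇒_ρ^α G_R`, consisting of a monic match `m`, an
adherence morphism `α` making the match square a pullback, the pullback `G_K`
of `α` along `l'`, and the pushout `G_R` of `r` along `u`. -/
structure RewriteStep {W : Type} [Preorder W] (ρ : PBPORule W) (G₀ G₁ : LGraph W) :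
    Type 1 where
  m : ρ.L ⟶ G₀
  mono_m : Mono m
  α : G₀ ⟶ ρ.L'
  matchPB : IsPullback (𝟙 ρ.L) m ρ.tL α
  GK : LGraph W
  gL : GK ⟶ G₀
  u' : GK ⟶ ρ.K'
  pbK : IsPullback gL u' α ρ.l'
  u : ρ.K ⟶ GK
  u_u' : u ≫ u' = ρ.tK
  u_gL : u ≫ gL = ρ.l ≫ m
  w : ρ.R ⟶ G₁
  gR : GK ⟶ G₁
  po : IsPushout ρ.r u w gR

/-- `G ⇒_ρ H` : there exists a PBPO⁺ rewrite step from `G` to `H` via `ρ`. -/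
def PBPOStep {W : Type} [Preorder W] (ρ : PBPORule W) (G H : LGraph W) : Prop :=
  Nonempty (RewriteStep ρ G H)

/-- A match `m` establishes a match (of the rule `ρ`) if it is monic and some
adherence morphism makes the match square a pullback. -/
def EstablishesMatch {W : Type} [Preorder W] (ρ : PBPORule W) {G : LGraph W}
    (m : ρ.L ⟶ G) : Prop :=
  Mono m ∧ ∃ α : G ⟶ ρ.L', m ≫ α = ρ.tL ∧ IsPullback (𝟙 ρ.L) m ρ.tL α

section RuleEnc

variable {S : Type} {ar : S → ℕ} {X : Type}

/-- The morphism `l : K → L` of the rule encoding. -/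
noncomputable def encKtoL (ρ : TRSRule S ar X) : GLHom (interfaceG ρ.rhs) ρ.lhs.enc where
  onV v := match v with
    | .inl x => Sum.inr ⟨x.1, ρ.var_cond x.2⟩
    | .inr _ => ρ.lhs.encRoot
  onE e := e.elim
  src_comm e := e.elim
  tgt_comm e := e.elim
  lV_le v := by cases v <;> exact Flat.bot_le _
  lE_le e := e.elim

/-- The morphism `r : K → R` of the rule encoding. -/
noncomputable def encKtoR (ρ : TRSRule S ar X) : GLHom (interfaceG ρ.rhs) ρ.rhs.enc where
  onV v := match v with
    | .inl x => Sum.inr x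
    | .inr _ => ρ.rhs.encRoot
  onE e := e.elim
  src_comm e := e.elim
  tgt_comm e := e.elim
  lV_le v := by cases v <;> exact Flat.bot_le _
  lE_le e := e.elim

/-- Mapping the primed (lower-closure) vertices of `K'` to those of `L'`. -/
noncomputable def mapPrime (ρ : TRSRule S ar X) :
    ↥(interfaceVars ρ.rhs) → ↥(ρ.lhs.varHeads) :=
  fun x' => match x' with
  | ⟨.inl x, _⟩ => ⟨Sum.inr ⟨x.1, ρ.var_cond x.2⟩, ⟨⟨x.1, ρ.var_cond x.2⟩, rfl⟩⟩
  | ⟨.inr u, h⟩ => absurd h (by rintro ⟨y, hy⟩; cases hy)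

/-- The morphism `l' : K' → L'` of the rule encoding. -/
noncomputable def encl' (ρ : TRSRule S ar X) :
    GLHom (ctxCC (interfaceG ρ.rhs) (Sum.inr ()) (interfaceVars ρ.rhs))
      (ctxCC ρ.lhs.enc ρ.lhs.encRoot ρ.lhs.varHeads) where
  onV v := match v with
    | .inl (.inl (.inl x)) => .inl (.inl (Sum.inr ⟨x.1, ρ.var_cond x.2⟩))
    | .inl (.inl (.inr _)) => .inl (.inl ρ.lhs.encRoot)
    | .inl (.inr x') => .inl (.inr (mapPrime ρ x'))
    | .inr u => .inr u
  onE e := match e with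
    | .inl (.inl e) => e.elim
    | .inl (.inr (.inl x')) => .inl (.inr (.inl (mapPrime ρ x')))
    | .inl (.inr (.inr x')) => .inl (.inr (.inr (mapPrime ρ x')))
    | .inr b => .inr b
  src_comm := by
    rintro ((e | (⟨(x | u), hv⟩ | ⟨(x | u), hv⟩)) | b)
    · exact e.elim
    · rfl
    · exact absurd hv (by rintro ⟨y, hy⟩; cases hy)
    · rfl
    · exact absurd hv (by rintro ⟨y, hy⟩; cases hy)
    · rfl
  tgt_comm := by
    rintro ((e | (x' | x')) | b)
    · exact e.elim
    · rfl
    · rfl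
    · cases b <;> rfl
  lV_le := by
    rintro (((x | u) | x') | c)
    · refine Flat.le_cases (Or.inr ?_)
      refine (ctxCC_lV_inl ρ.lhs.enc ρ.lhs.encRoot ρ.lhs.varHeads
        (Sum.inr ⟨x.1, ρ.var_cond x.2⟩)).trans ?_
      rw [if_pos ⟨⟨x.1, ρ.var_cond x.2⟩, rfl⟩]
    · refine Flat.le_cases (Or.inl ?_)
      refine (ctxCC_lV_inl (interfaceG ρ.rhs) (Sum.inr ()) (interfaceVars ρ.rhs)
        (Sum.inr u)).trans ?_
      rw [if_neg (by rintro ⟨y, hy⟩; cases hy)]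
      rfl
    · exact Flat.le_cases (Or.inr rfl)
    · exact Flat.le_cases (Or.inr rfl)
  lE_le := by
    rintro ((e | (x' | x')) | b)
    · exact e.elim
    · exact Flat.le_cases (Or.inr rfl)
    · exact Flat.le_cases (Or.inr rfl)
    · exact Flat.le_cases (Or.inr rfl)

/-- The rule encoding `ρ°` of a term rewrite rule `ρ : l → r` as a PBPO⁺ rule. -/
noncomputable def ruleEnc (ρ : TRSRule S ar X) : PBPORule (FlatL S) where
  L := ρ.lhs.enc
  K := interfaceG ρ.rhs
  R := ρ.rhs.enc
  L' := ctxCC ρ.lhs.enc ρ.lhs.encRoot ρ.lhs.varHeads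
  K' := ctxCC (interfaceG ρ.rhs) (Sum.inr ()) (interfaceVars ρ.rhs)
  l := encKtoL ρ
  r := encKtoR ρ
  l' := encl' ρ
  tL := tCC ρ.lhs.enc ρ.lhs.encRoot ρ.lhs.varHeads
  tK := tCC (interfaceG ρ.rhs) (Sum.inr ()) (interfaceVars ρ.rhs)

/-- The rewrite relation of an encoded term rewriting system `R°`. -/
def SysStep (Rs : Set (TRSRule S ar X)) (G H : LGraph (FlatL S)) : Prop :=
  ∃ ρ ∈ Rs, PBPOStep (ruleEnc ρ) G H

end RuleEnc
section Cycles

variable {W : Type}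

/-- `IsUPath G u es v`: `es` is an undirected path from `u` to `v` in `G`. -/
def IsUPath (G : LGraph W) : G.V → List G.E → G.V → Prop
  | u, [], v => u = v
  | u, e :: es, v =>
      (G.src e = u ∧ IsUPath G (G.tgt e) es v) ∨ (G.tgt e = u ∧ IsUPath G (G.src e) es v)

/-- An undirected cycle at `v`: a nonempty undirected path from `v` to `v`
with pairwise distinct edges. -/
def IsUCycle (G : LGraph W) (v : G.V) (es : List G.E) : Prop :=
  es ≠ [] ∧ es.Nodup ∧ IsUPath G v es v

/-- A cycle edge is an edge lying on some undirected cycle. -/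
def CycleEdge (G : LGraph W) (e : G.E) : Prop :=
  ∃ v es, IsUCycle G v es ∧ e ∈ es

/-- A graph is cycle-free if it contains no undirected cycle. -/
def CycleFree (G : LGraph W) : Prop := ¬ ∃ v es, IsUCycle G v es

/-- `[G]`: the graph obtained from `G` by deleting all cycle edges. -/
def dropCycles (G : LGraph W) : LGraph W where
  V := G.V
  E := {e : G.E // ¬ CycleEdge G e}
  src e := G.src e.1
  tgt e := G.tgt e.1
  lV := G.lV
  lE e := G.lE e.1

end Cycles

section Zones

variable {S : Type}

/-- A vertex is in-well-formed if it has at most one incoming edge. -/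
def InWF (G : LGraph (FlatL S)) (v : G.V) : Prop :=
  ∀ e e' : G.E, G.tgt e = v → G.tgt e' = v → e = e'

/-- A vertex is out-well-formed if its label is a function symbol `f` and it
has exactly `ar f` outgoing edges, labeled `1, …, ar f`. -/
def OutWF (G : LGraph (FlatL S)) (ar : S → ℕ) (v : G.V) : Prop :=
  ∃ f : S, G.lV v = Flat.el (Sum.inl f) ∧
    ∃ φ : Fin (ar f) ≃ {e : G.E // G.src e = v},
      ∀ i, G.lE (φ i).1 = Flat.el (Sum.inr ⟨(i : ℕ) + 1, Nat.succ_pos _⟩)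

/-- A vertex is good if it is out-well-formed and all its children are
in-well-formed; otherwise it is bad. -/
def Good (G : LGraph (FlatL S)) (ar : S → ℕ) (v : G.V) : Prop :=
  OutWF G ar v ∧ ∀ e : G.E, G.src e = v → InWF G (G.tgt e)

/-- The edges included in a zone by the zoning algorithm are exactly the edges
with a good source. -/
def ZoneEdge (G : LGraph (FlatL S)) (ar : S → ℕ) (e : G.E) : Prop :=
  Good G ar (G.src e)

/-- One directed step along an edge included in a zone. -/
def ZStep (G : LGraph (FlatL S)) (ar : S → ℕ) (u v : G.V) : Prop :=
  ∃ e, ZoneEdge G ar e ∧ G.src e = u ∧ G.tgt e = v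

/-- Two vertices lie in the same zone iff they are connected by edges included
in zones (equivalence closure of `ZStep`). -/
def SameZone (G : LGraph (FlatL S)) (ar : S → ℕ) : G.V → G.V → Prop :=
  Relation.EqvGen (ZStep G ar)

/-- A root of a zone: a vertex with no parent inside its zone. -/
def IsZoneRoot (G : LGraph (FlatL S)) (ar : S → ℕ) (r : G.V) : Prop :=
  ¬ ∃ e, ZoneEdge G ar e ∧ G.tgt e = r

/-- A directed path along zone edges. -/
def IsZPath (G : LGraph (FlatL S)) (ar : S → ℕ) : G.V → List G.E → G.V → Prop
  | u, [], v => u = v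
  | u, e :: es, v => ZoneEdge G ar e ∧ G.src e = u ∧ IsZPath G ar (G.tgt e) es v

/-- The zone of `v₀`, as a subgraph of `G`, with every bad vertex relabeled
with `⊥`. -/
noncomputable def zoneTermGraph (G : LGraph (FlatL S)) (ar : S → ℕ) (v₀ : G.V) :
    LGraph (FlatL S) where
  V := {u : G.V // SameZone G ar u v₀}
  E := {e : G.E // ZoneEdge G ar e ∧ SameZone G ar (G.src e) v₀}
  src e := ⟨G.src e.1, e.2.2⟩
  tgt e := ⟨G.tgt e.1,
    Relation.EqvGen.trans _ _ _
      (Relation.EqvGen.symm _ _ (Relation.EqvGen.rel _ _ ⟨e.1, e.2.1, rfl, rfl⟩)) e.2.2⟩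
  lV u := if Good G ar u.1 then G.lV u.1 else Flat.bot
  lE e := G.lE e.1

end Zones

section Relabel

variable {W : Type}

/-- `G` with the label of vertex `v` changed to `l`. -/
noncomputable def relabelV (G : LGraph W) (v : G.V) (l : W) : LGraph W :=
  { G with lV := Function.update G.lV v l }

/-- `G` with the label of every vertex in `s` changed to `l`. -/
noncomputable def relabelSet (G : LGraph W) (s : Set G.V) (l : W) : LGraph W :=
  { G with lV := fun u => if u ∈ s then l else G.lV u }

end Relabel

/-! ### Auxiliary development for Statement 15 -/

/-- Build an isomorphism of labeled graphs from a bijective, label-preserving morphism. -/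
noncomputable def mkLIso {W : Type} [Preorder W] {G H : LGraph W} (f : GLHom G H)
    (hV : Function.Bijective f.onV) (hE : Function.Bijective f.onE)
    (hlV : ∀ v, H.lV (f.onV v) = G.lV v) (hlE : ∀ e, H.lE (f.onE e) = G.lE e) :
    G ≅ H where
  hom := f
  inv :=
    { onV := (Equiv.ofBijective f.onV hV).symm
      onE := (Equiv.ofBijective f.onE hE).symm
      src_comm := fun e => hV.1 (by
        rw [Equiv.ofBijective_apply_symm_apply f.onV hV, ← f.src_comm,
          Equiv.ofBijective_apply_symm_apply f.onE hE])
      tgt_comm := fun e => hV.1 (by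
        rw [Equiv.ofBijective_apply_symm_apply f.onV hV, ← f.tgt_comm,
          Equiv.ofBijective_apply_symm_apply f.onE hE])
      lV_le := fun v => le_of_eq (by
        conv_lhs => rw [← Equiv.ofBijective_apply_symm_apply f.onV hV v]
        rw [hlV])
      lE_le := fun e => le_of_eq (by
        conv_lhs => rw [← Equiv.ofBijective_apply_symm_apply f.onE hE e]
        rw [hlE]) }
  hom_inv_id := GLHom.ext'
    (funext fun v => (Equiv.ofBijective f.onV hV).symm_apply_apply v)
    (funext fun e => (Equiv.ofBijective f.onE hE).symm_apply_apply e)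
  inv_hom_id := GLHom.ext'
    (funext fun v => Equiv.ofBijective_apply_symm_apply f.onV hV v)
    (funext fun e => Equiv.ofBijective_apply_symm_apply f.onE hE e)

theorem mkLIso_hom {W : Type} [Preorder W] {G H : LGraph W} (f : GLHom G H)
    (hV : Function.Bijective f.onV) (hE : Function.Bijective f.onE)
    (hlV : ∀ v, H.lV (f.onV v) = G.lV v) (hlE : ∀ e, H.lE (f.onE e) = G.lE e) :
    (mkLIso f hV hE hlV hlE).hom = f := rfl

namespace St15

open Classical

variable {S : Type} {ar : S → ℕ} {G : LGraph (FlatL S)} {v₀ : G.V}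

/-- The vertex set of the zone of `v₀`. -/
abbrev ZV (ar : S → ℕ) (G : LGraph (FlatL S)) (v₀ : G.V) : Type :=
  {u : G.V // SameZone G ar u v₀}

/-- The symbol of a good vertex. -/
noncomputable def symOf {v : G.V} (h : Good G ar v) : S := h.1.choose

theorem lV_symOf {v : G.V} (h : Good G ar v) :
    G.lV v = Flat.el (Sum.inl (symOf h)) := h.1.choose_spec.1

/-- The bijection from argument positions to outgoing edges of a good vertex. -/
noncomputable def outφ {v : G.V} (h : Good G ar v) :
    Fin (ar (symOf h)) ≃ {e : G.E // G.src e = v} := h.1.choose_spec.2.choose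

theorem lE_outφ {v : G.V} (h : Good G ar v) (i : Fin (ar (symOf h))) :
    G.lE (outφ h i).1 = Flat.el (Sum.inr ⟨(i : ℕ) + 1, Nat.succ_pos _⟩) :=
  h.1.choose_spec.2.choose_spec i

theorem label_inj {i j : ℕ}
    (h : (Flat.el (Sum.inr ⟨i + 1, Nat.succ_pos _⟩) : FlatL S)
        = Flat.el (Sum.inr ⟨j + 1, Nat.succ_pos _⟩)) : i = j := by
  injection h with h
  injection h with h
  have h2 : i + 1 = j + 1 := congrArg Subtype.val h
  omega

theorem edge_eq_of_label {v : G.V} (h : Good G ar v) {e e' : G.E}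
    (he : G.src e = v) (he' : G.src e' = v) (hl : G.lE e = G.lE e') : e = e' := by
  have h1 : ((outφ h) ((outφ h).symm ⟨e, he⟩)).1 = e := by
    rw [Equiv.apply_symm_apply]
  have h2 : ((outφ h) ((outφ h).symm ⟨e', he'⟩)).1 = e' := by
    rw [Equiv.apply_symm_apply]
  rw [← h1, ← h2] at hl
  rw [lE_outφ, lE_outφ] at hl
  have h3 : (outφ h).symm ⟨e, he⟩ = (outφ h).symm ⟨e', he'⟩ := Fin.ext (label_inj hl)
  rw [← h1, ← h2, h3]

theorem tgt_mem {u : G.V} (hu : SameZone G ar u v₀) {e : G.E} (he : ZoneEdge G ar e)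
    (hs : G.src e = u) : SameZone G ar (G.tgt e) v₀ :=
  Relation.EqvGen.trans _ _ _
    (Relation.EqvGen.symm _ _ (Relation.EqvGen.rel _ _ ⟨e, he, hs, rfl⟩)) hu

theorem src_mem {e : G.E} (he : ZoneEdge G ar e) (ht : SameZone G ar (G.tgt e) v₀) :
    SameZone G ar (G.src e) v₀ :=
  Relation.EqvGen.trans _ _ _ (Relation.EqvGen.rel _ _ ⟨e, he, rfl, rfl⟩) ht

section WF

variable (ar G v₀)

theorem wf_child (hfin : FiniteG G)
    (hacyc : ¬ ∃ u, SameZone G ar u v₀ ∧ Relation.TransGen (ZStep G ar) u u) :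
    WellFounded (fun a b : ZV ar G v₀ => ZStep G ar b.1 a.1) := by
  have : Finite G.V := hfin.1
  have hwf : WellFounded
      (Relation.TransGen (fun a b : ZV ar G v₀ => ZStep G ar b.1 a.1)) := by
    have h2 : IsIrrefl (ZV ar G v₀)
        (Relation.TransGen (fun a b : ZV ar G v₀ => ZStep G ar b.1 a.1)) := by
      constructor
      intro a ha
      exact hacyc ⟨a.1, a.2, Relation.transGen_swap.mp
        (Relation.TransGen.lift Subtype.val (fun x y hxy => hxy) _ _ ha)⟩
    exact Finite.wellFounded_of_trans_of_irrefl _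
  exact Subrelation.wf
    (r := Relation.TransGen (fun a b : ZV ar G v₀ => ZStep G ar b.1 a.1))
    (fun h => Relation.TransGen.single h) hwf

theorem wf_par (hfin : FiniteG G)
    (hacyc : ¬ ∃ u, SameZone G ar u v₀ ∧ Relation.TransGen (ZStep G ar) u u) :
    WellFounded (fun a b : ZV ar G v₀ => ZStep G ar a.1 b.1) := by
  have : Finite G.V := hfin.1
  have hwf : WellFounded
      (Relation.TransGen (fun a b : ZV ar G v₀ => ZStep G ar a.1 b.1)) := by
    have h2 : IsIrrefl (ZV ar G v₀)
        (Relation.TransGen (fun a b : ZV ar G v₀ => ZStep G ar a.1 b.1)) := by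
      constructor
      intro a ha
      exact hacyc ⟨a.1, a.2,
        Relation.TransGen.lift Subtype.val (fun x y hxy => hxy) _ _ ha⟩
    exact Finite.wellFounded_of_trans_of_irrefl _
  exact Subrelation.wf
    (r := Relation.TransGen (fun a b : ZV ar G v₀ => ZStep G ar a.1 b.1))
    (fun h => Relation.TransGen.single h) hwf

end WF

theorem zoneEdge_out {v : G.V} (h : Good G ar v) (i : Fin (ar (symOf h))) :
    ZoneEdge G ar (outφ h i).1 := by
  show Good G ar (G.src (outφ h i).1)
  rw [(outφ h i).2]; exact h

/-- The `i`-th child of a good zone vertex. -/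
noncomputable def childV (u : ZV ar G v₀) (h : Good G ar u.1) (i : Fin (ar (symOf h))) :
    ZV ar G v₀ :=
  ⟨G.tgt (outφ h i).1, tgt_mem u.2 (zoneEdge_out h i) (outφ h i).2⟩

theorem zstep_child (u : ZV ar G v₀) (h : Good G ar u.1) (i : Fin (ar (symOf h))) :
    ZStep G ar u.1 (childV u h i).1 :=
  ⟨(outφ h i).1, zoneEdge_out h i, (outφ h i).2, rfl⟩

variable {X : Type}

/-- The term read off from a zone vertex downwards. -/
noncomputable def term (name : ZV ar G v₀ → X)
    (hwf : WellFounded (fun a b : ZV ar G v₀ => ZStep G ar b.1 a.1)) :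
    ZV ar G v₀ → Term S ar X :=
  hwf.fix (fun u IH =>
    if h : Good G ar u.1 then
      .app (symOf h) (fun i => IH (childV u h i) (zstep_child u h i))
    else .var (name u))

theorem term_good (name : ZV ar G v₀ → X) (hwf) {u : ZV ar G v₀} (h : Good G ar u.1) :
    term name hwf u = .app (symOf h) (fun i => term name hwf (childV u h i)) := by
  show hwf.fix _ u = _
  rw [WellFounded.fix_eq, dif_pos h]
  rfl

theorem term_bad (name : ZV ar G v₀ → X) (hwf) {u : ZV ar G v₀} (h : ¬ Good G ar u.1) :
    term name hwf u = .var (name u) := by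
  show hwf.fix _ u = _
  rw [WellFounded.fix_eq, dif_neg h]

/-- A zone vertex has a parent if some zone edge points to it. -/
def hasParent (u : ZV ar G v₀) : Prop := ∃ e : G.E, ZoneEdge G ar e ∧ G.tgt e = u.1

noncomputable def pEdge (u : ZV ar G v₀) (h : hasParent u) : G.E := h.choose

theorem pEdge_zone (u : ZV ar G v₀) (h : hasParent u) : ZoneEdge G ar (pEdge u h) :=
  h.choose_spec.1

theorem pEdge_tgt (u : ZV ar G v₀) (h : hasParent u) : G.tgt (pEdge u h) = u.1 :=
  h.choose_spec.2

noncomputable def parentV (u : ZV ar G v₀) (h : hasParent u) : ZV ar G v₀ :=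
  ⟨G.src (pEdge u h), src_mem (pEdge_zone u h) (by rw [pEdge_tgt u h]; exact u.2)⟩

theorem zstep_parent (u : ZV ar G v₀) (h : hasParent u) :
    ZStep G ar (parentV u h).1 u.1 :=
  ⟨pEdge u h, pEdge_zone u h, rfl, pEdge_tgt u h⟩

theorem parent_edge_unique {e e' : G.E} (he : ZoneEdge G ar e)
    (h : G.tgt e = G.tgt e') : e = e' := by
  have hIn : InWF G (G.tgt e) := he.2 e rfl
  exact hIn e e' rfl h.symm

theorem pEdge_eq (u : ZV ar G v₀) (h : hasParent u) {e : G.E}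
    (hz : ZoneEdge G ar e) (ht : G.tgt e = u.1) : pEdge u h = e :=
  parent_edge_unique (pEdge_zone u h) (by rw [pEdge_tgt u h, ht])

/-- The index of an edge among the outgoing edges of its (good) source. -/
noncomputable def idx (e : G.E) (he : Good G ar (G.src e)) : ℕ :=
  ((outφ he).symm ⟨e, rfl⟩ : Fin _)

theorem idx_lt (e : G.E) (he : Good G ar (G.src e)) : idx e he < ar (symOf he) :=
  ((outφ he).symm ⟨e, rfl⟩).isLt

theorem lE_idx (e : G.E) (he : Good G ar (G.src e)) :
    G.lE e = Flat.el (Sum.inr ⟨idx e he + 1, Nat.succ_pos _⟩) := by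
  have h1 : ((outφ he) ((outφ he).symm ⟨e, rfl⟩)).1 = e := by
    rw [Equiv.apply_symm_apply]
  conv_lhs => rw [← h1]
  exact lE_outφ he _

/-- The position of a zone vertex, read off by following parents up to the root. -/
noncomputable def posOf
    (hwf : WellFounded (fun a b : ZV ar G v₀ => ZStep G ar a.1 b.1)) :
    ZV ar G v₀ → List ℕ :=
  hwf.fix (fun u IH =>
    if h : hasParent u then
      IH (parentV u h) (zstep_parent u h) ++ [idx (pEdge u h) (pEdge_zone u h)]
    else [])

theorem posOf_parent (hwf) {u : ZV ar G v₀} (h : hasParent u) :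
    posOf hwf u = posOf hwf (parentV u h) ++ [idx (pEdge u h) (pEdge_zone u h)] := by
  show hwf.fix _ u = _
  rw [WellFounded.fix_eq, dif_pos h]
  rfl

theorem posOf_noparent (hwf) {u : ZV ar G v₀} (h : ¬ hasParent u) :
    posOf hwf u = [] := by
  show hwf.fix _ u = _
  rw [WellFounded.fix_eq, dif_neg h]

/-- The root of the zone, reached from a vertex by following parents. -/
noncomputable def rootOf
    (hwf : WellFounded (fun a b : ZV ar G v₀ => ZStep G ar a.1 b.1)) :
    ZV ar G v₀ → ZV ar G v₀ :=
  hwf.fix (fun u IH =>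
    if h : hasParent u then IH (parentV u h) (zstep_parent u h) else u)

theorem rootOf_parent (hwf) {u : ZV ar G v₀} (h : hasParent u) :
    rootOf hwf u = rootOf hwf (parentV u h) := by
  show hwf.fix _ u = _
  rw [WellFounded.fix_eq, dif_pos h]
  rfl

theorem rootOf_noparent (hwf) {u : ZV ar G v₀} (h : ¬ hasParent u) :
    rootOf hwf u = u := by
  show hwf.fix _ u = _
  rw [WellFounded.fix_eq, dif_neg h]

theorem rootOf_root (hwf) (u : ZV ar G v₀) : ¬ hasParent (rootOf hwf u) := by
  refine hwf.induction (C := fun w => ¬ hasParent (rootOf hwf w)) u fun w IH => ?_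
  show ¬ hasParent (rootOf hwf w)
  by_cases h : hasParent w
  · rw [rootOf_parent hwf h]
    exact IH (parentV w h) (zstep_parent w h)
  · rw [rootOf_noparent hwf h]
    exact h

theorem rootOf_step (hwf) {a b : ZV ar G v₀} (h : ZStep G ar a.1 b.1) :
    rootOf hwf a = rootOf hwf b := by
  obtain ⟨e, hz, hs, ht⟩ := h
  have hp : hasParent b := ⟨e, hz, ht⟩
  rw [rootOf_parent hwf hp]
  congr 1
  apply Subtype.ext
  show a.1 = G.src (pEdge b hp)
  rw [pEdge_eq b hp hz ht, hs]

theorem rootOf_sz (hwf) {a b : G.V} (h : Relation.EqvGen (ZStep G ar) a b) :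
    ∀ (ha : SameZone G ar a v₀) (hb : SameZone G ar b v₀),
      rootOf hwf ⟨a, ha⟩ = rootOf hwf ⟨b, hb⟩ := by
  induction h with
  | rel a b hab => intro ha hb; exact rootOf_step hwf hab
  | refl a => intro ha hb; rfl
  | symm a b h ih => intro ha hb; exact (ih hb ha).symm
  | trans a b c h1 h2 ih1 ih2 =>
      intro ha hc
      have hb : SameZone G ar b v₀ := Relation.EqvGen.trans _ _ _ h2 hc
      exact (ih1 ha hb).trans (ih2 hb hc)

/-- Descending from a vertex along a position. -/
noncomputable def descend : ZV ar G v₀ → List ℕ → Option (ZV ar G v₀)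
  | u, [] => some u
  | u, i :: p =>
    if h : Good G ar u.1 then
      if hi : i < ar (symOf h) then descend (childV u h ⟨i, hi⟩) p else none
    else none

theorem descend_append (u : ZV ar G v₀) (p q : List ℕ) :
    descend u (p ++ q) = (descend u p).bind (fun w => descend w q) := by
  induction p generalizing u with
  | nil => simp [descend]
  | cons i p ih =>
    simp only [List.cons_append]
    by_cases h : Good G ar u.1
    · by_cases hi : i < ar (symOf h)
      · show descend u (i :: (p ++ q)) = _
        rw [show descend u (i :: (p ++ q)) = descend (childV u h ⟨i, hi⟩) (p ++ q) from
          by rw [descend, dif_pos h, dif_pos hi],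
          show descend u (i :: p) = descend (childV u h ⟨i, hi⟩) p from
          by rw [descend, dif_pos h, dif_pos hi], ih]
      · rw [show descend u (i :: (p ++ q)) = none from by rw [descend, dif_pos h, dif_neg hi],
          show descend u (i :: p) = none from by rw [descend, dif_pos h, dif_neg hi]]
        rfl
    · rw [show descend u (i :: (p ++ q)) = none from by rw [descend, dif_neg h],
        show descend u (i :: p) = none from by rw [descend, dif_neg h]]
      rfl

theorem sub_descend (name : ZV ar G v₀ → X) (hwf) (p : List ℕ) (u : ZV ar G v₀) :
    (term name hwf u).sub? p = (descend u p).map (term name hwf) := by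
  induction p generalizing u with
  | nil => simp [descend, Term.sub?]
  | cons i p ih =>
    by_cases h : Good G ar u.1
    · rw [term_good name hwf h]
      show Term.sub? _ (i :: p) = _
      rw [Term.sub?]
      by_cases hi : i < ar (symOf h)
      · rw [dif_pos hi, ih, show descend u (i :: p) = descend (childV u h ⟨i, hi⟩) p from
          by rw [descend, dif_pos h, dif_pos hi]]
      · rw [dif_neg hi, show descend u (i :: p) = none from
          by rw [descend, dif_pos h, dif_neg hi]]
        rfl
    · rw [term_bad name hwf h, show descend u (i :: p) = none from by rw [descend, dif_neg h]]
      rfl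

theorem posOf_child (hwf) (u : ZV ar G v₀) (hg : Good G ar u.1)
    (i : Fin (ar (symOf hg))) :
    posOf hwf (childV u hg i) = posOf hwf u ++ [(i : ℕ)] := by
  have hp : hasParent (childV u hg i) := ⟨(outφ hg i).1, zoneEdge_out hg i, rfl⟩
  rw [posOf_parent hwf hp]
  have he : pEdge _ hp = (outφ hg i).1 := pEdge_eq _ hp (zoneEdge_out hg i) rfl
  have hpar : parentV _ hp = u := by
    apply Subtype.ext
    show G.src (pEdge _ hp) = u.1
    rw [he, (outφ hg i).2]
  have hidx : idx (pEdge _ hp) (pEdge_zone _ hp) = (i : ℕ) := by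
    apply label_inj (S := S)
    rw [← lE_idx (pEdge _ hp) (pEdge_zone _ hp), he, lE_outφ]
  rw [hpar, hidx]

theorem descend_posOf (hwf) {p : List ℕ} :
    ∀ {u v : ZV ar G v₀}, descend u p = some v → posOf hwf v = posOf hwf u ++ p := by
  induction p with
  | nil =>
    intro u v h
    have h' : u = v := Option.some.inj h
    subst h'
    simp
  | cons i p ih =>
    intro u v h
    by_cases hg : Good G ar u.1
    · by_cases hi : i < ar (symOf hg)
      · rw [show descend u (i :: p) = descend (childV u hg ⟨i, hi⟩) p from
          by rw [descend, dif_pos hg, dif_pos hi]] at h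
        rw [ih h, posOf_child hwf u hg ⟨i, hi⟩]
        simp
      · rw [show descend u (i :: p) = none from
          by rw [descend, dif_pos hg, dif_neg hi]] at h
        cases h
    · rw [show descend u (i :: p) = none from by rw [descend, dif_neg hg]] at h
      cases h

theorem descend_child (u : ZV ar G v₀) (h : Good G ar u.1) (i : Fin (ar (symOf h))) :
    descend u [(i : ℕ)] = some (childV u h i) := by
  have hi : (i : ℕ) < ar (symOf h) := i.isLt
  rw [descend, dif_pos h, dif_pos hi]
  rfl

theorem reach (hwfp) (u : ZV ar G v₀) :
    descend (rootOf hwfp u) (posOf hwfp u) = some u := by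
  refine hwfp.induction
    (C := fun w => descend (rootOf hwfp w) (posOf hwfp w) = some w) u fun w IH => ?_
  show descend (rootOf hwfp w) (posOf hwfp w) = some w
  by_cases h : hasParent w
  · rw [rootOf_parent hwfp h, posOf_parent hwfp h, descend_append,
      IH (parentV w h) (zstep_parent w h)]
    have hd := descend_child (parentV w h) (pEdge_zone w h)
      ((outφ (pEdge_zone w h)).symm ⟨pEdge w h, rfl⟩)
    have htgt : (childV (parentV w h) (pEdge_zone w h)
        ((outφ (pEdge_zone w h)).symm ⟨pEdge w h, rfl⟩)) = w := by
      apply Subtype.ext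
      show G.tgt ((outφ (pEdge_zone w h)) ((outφ (pEdge_zone w h)).symm ⟨pEdge w h, rfl⟩)).1
        = w.1
      rw [Equiv.apply_symm_apply]
      exact pEdge_tgt w h
    exact hd.trans (congrArg some htgt)
  · rw [rootOf_noparent hwfp h, posOf_noparent hwfp h]
    rfl

theorem var_inj {t : Term S ar X} {p : List ℕ} {x y : X}
    (h1 : t.sub? p = some (.var x)) (h2 : t.sub? p = some (.var y)) : x = y := by
  have h3 := Option.some.inj (h1.symm.trans h2)
  injection h3

theorem encTgt_inl {t : Term S ar X} (E : t.encE)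
    (q : {p : List ℕ // (t.symAt p).isSome}) (h : q.1 = E.1.1 ++ [E.1.2]) :
    t.encTgt E = Sum.inl q := by
  have hs : (t.symAt (E.1.1 ++ [E.1.2])).isSome := h ▸ q.2
  unfold Term.encTgt
  erw [dif_pos hs]
  exact congrArg Sum.inl (Subtype.ext h.symm)

theorem encTgt_inr {t : Term S ar X} (E : t.encE) (q : {x : X // x ∈ t.vars})
    (h : t.sub? (E.1.1 ++ [E.1.2]) = some (.var q.1)) :
    t.encTgt E = Sum.inr q := by
  have hs : ¬ (t.symAt (E.1.1 ++ [E.1.2])).isSome := by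
    unfold Term.symAt
    rw [h]
    simp [Term.head?]
  unfold Term.encTgt
  erw [dif_neg hs]
  refine congrArg Sum.inr (Subtype.ext ?_)
  exact var_inj (Classical.choose_spec (Term.edge_tgt_var t E.2 hs)) h

theorem encRoot_inl {t : Term S ar X}
    (q : {p : List ℕ // (t.symAt p).isSome}) (h : q.1 = []) :
    t.encRoot = Sum.inl q := by
  have hs : (t.symAt []).isSome := h ▸ q.2
  unfold Term.encRoot
  erw [dif_pos hs]
  exact congrArg Sum.inl (Subtype.ext h.symm)

theorem encRoot_inr {t : Term S ar X} (q : {x : X // x ∈ t.vars})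
    (h : t.sub? [] = some (.var q.1)) :
    t.encRoot = Sum.inr q := by
  have hs : ¬ (t.symAt []).isSome := by
    unfold Term.symAt
    rw [h]
    simp [Term.head?]
  unfold Term.encRoot
  erw [dif_neg hs]
  refine congrArg Sum.inr (Subtype.ext ?_)
  exact var_inj (Classical.choose_spec (Term.root_var t hs)) h

theorem main {X : Type} [Infinite X] (hfin : FiniteG G)
    (hacyc : ¬ ∃ u, SameZone G ar u v₀ ∧ Relation.TransGen (ZStep G ar) u u) :
    ∃ t : Term S ar X, t.Linear ∧ ∃ iso : zoneTermGraph G ar v₀ ≅ t.enc,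
      ∀ r : (zoneTermGraph G ar v₀).V,
        (¬ ∃ e : (zoneTermGraph G ar v₀).E, (zoneTermGraph G ar v₀).tgt e = r) →
        homV iso.hom r = t.encRoot := by
  classical
  have hGV : Finite G.V := hfin.1
  obtain ⟨n, ⟨eqv⟩⟩ := Finite.exists_equiv_fin (ZV ar G v₀)
  obtain ⟨name, hname⟩ : ∃ name : ZV ar G v₀ → X, Function.Injective name :=
    ⟨fun u => Infinite.natEmbedding X (eqv u),
     fun a b h => eqv.injective (Fin.val_injective ((Infinite.natEmbedding X).injective h))⟩
  have hwfc := wf_child ar G v₀ hfin hacyc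
  have hwfp := wf_par ar G v₀ hfin hacyc
  obtain ⟨r, hroot⟩ : ∃ r : ZV ar G v₀, ∀ u, rootOf hwfp u = r :=
    ⟨rootOf hwfp ⟨v₀, Relation.EqvGen.refl v₀⟩,
     fun u => rootOf_sz hwfp u.2 u.2 (Relation.EqvGen.refl v₀)⟩
  have hnp : ¬ hasParent r := by
    have h1 := rootOf_root hwfp r
    rwa [hroot r] at h1
  have hpr : posOf hwfp r = [] := posOf_noparent hwfp hnp
  have hreach : ∀ u : ZV ar G v₀, descend r (posOf hwfp u) = some u := by
    intro u
    have h1 := reach hwfp u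
    rwa [hroot u] at h1
  have htermAt : ∀ u : ZV ar G v₀,
      (term name hwfc r).sub? (posOf hwfp u) = some (term name hwfc u) := by
    intro u
    rw [sub_descend name hwfc, hreach u]
    rfl
  have hsymAt : ∀ (u : ZV ar G v₀) (h : Good G ar u.1),
      (term name hwfc r).symAt (posOf hwfp u) = some (symOf h) := by
    intro u h
    unfold Term.symAt
    rw [htermAt u, term_good name hwfc h]
    rfl
  have hsubBad : ∀ (u : ZV ar G v₀) (h : ¬ Good G ar u.1),
      (term name hwfc r).sub? (posOf hwfp u) = some (.var (name u)) := by
    intro u h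
    rw [htermAt u, term_bad name hwfc h]
  have hgoodSome : ∀ (u : ZV ar G v₀) (h : Good G ar u.1),
      ((term name hwfc r).symAt (posOf hwfp u)).isSome := by
    intro u h
    rw [hsymAt u h]
    rfl
  have hposInj : ∀ u w : ZV ar G v₀, posOf hwfp u = posOf hwfp w → u = w := by
    intro u w h
    have h1 := hreach u
    rw [h, hreach w] at h1
    exact (Option.some.inj h1).symm
  have hAt : ∀ (p : List ℕ) (f : S), (term name hwfc r).symAt p = some f →
      ∃ (v : ZV ar G v₀) (h : Good G ar v.1), posOf hwfp v = p ∧ symOf h = f := by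
    intro p f hpf
    unfold Term.symAt at hpf
    rw [sub_descend name hwfc] at hpf
    cases hd : descend r p with
    | none => rw [hd] at hpf; exact absurd hpf (by simp)
    | some v =>
      rw [hd] at hpf
      simp only [Option.map_some, Option.bind_some] at hpf
      by_cases hg : Good G ar v.1
      · rw [term_good name hwfc hg] at hpf
        have hsf : symOf hg = f := by simpa [Term.head?] using hpf
        refine ⟨v, hg, ?_, hsf⟩
        rw [descend_posOf hwfp hd, hpr]
        rfl
      · rw [term_bad name hwfc hg] at hpf
        exact absurd hpf (by simp [Term.head?])
  have hVar : ∀ (p : List ℕ) (x : X), (term name hwfc r).sub? p = some (.var x) →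
      ∃ v : ZV ar G v₀, ¬ Good G ar v.1 ∧ posOf hwfp v = p ∧ name v = x := by
    intro p x hpx
    rw [sub_descend name hwfc] at hpx
    cases hd : descend r p with
    | none => rw [hd] at hpx; exact absurd hpx (by simp)
    | some v =>
      rw [hd] at hpx
      simp only [Option.map_some] at hpx
      have hpx' := Option.some.inj hpx
      by_cases hg : Good G ar v.1
      · rw [term_good name hwfc hg] at hpx'
        exact absurd hpx' (by simp)
      · rw [term_bad name hwfc hg] at hpx'
        refine ⟨v, hg, ?_, ?_⟩
        · rw [descend_posOf hwfp hd, hpr]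
          rfl
        · injection hpx'
  have hlin : (term name hwfc r).Linear := by
    intro x p q hp hq
    obtain ⟨v, _, hv2, hv3⟩ := hVar p x hp
    obtain ⟨w, _, hw2, hw3⟩ := hVar q x hq
    have hvw : v = w := hname (hv3.trans hw3.symm)
    subst hvw
    exact hv2.symm.trans hw2
  have hposTgt : ∀ (e : G.E) (hz : ZoneEdge G ar e) (hs : SameZone G ar (G.src e) v₀)
      (ht : SameZone G ar (G.tgt e) v₀),
      posOf hwfp ⟨G.tgt e, ht⟩ = posOf hwfp ⟨G.src e, hs⟩ ++ [idx e hz] := by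
    intro e hz hs ht
    have hc := posOf_child hwfp ⟨G.src e, hs⟩ hz ((outφ hz).symm ⟨e, rfl⟩)
    have hcv : childV ⟨G.src e, hs⟩ hz ((outφ hz).symm ⟨e, rfl⟩)
        = (⟨G.tgt e, ht⟩ : ZV ar G v₀) := by
      apply Subtype.ext
      show G.tgt ((outφ hz) ((outφ hz).symm ⟨e, rfl⟩)).1 = G.tgt e
      rw [Equiv.apply_symm_apply]
    rw [hcv] at hc
    exact hc
  refine ⟨term name hwfc r, hlin,
    ⟨mkLIso
      ⟨fun u => if h : Good G ar u.1 then Sum.inl ⟨posOf hwfp u, hgoodSome u h⟩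
          else Sum.inr ⟨name u, ⟨posOf hwfp u, hsubBad u h⟩⟩,
        fun e => ⟨(posOf hwfp ⟨G.src e.1, e.2.2⟩, idx e.1 e.2.1),
          ⟨symOf e.2.1, hsymAt ⟨G.src e.1, e.2.2⟩ e.2.1, idx_lt e.1 e.2.1⟩⟩,
        ?_, ?_, ?_, ?_⟩ ?_ ?_ ?_ ?_, ?_⟩⟩
  -- src_comm
  · intro e
    have hz : Good G ar (G.src e.1) := e.2.1
    dsimp only [Term.enc, zoneTermGraph]
    erw [dif_pos hz]
  -- tgt_comm
  · intro e
    have ht : SameZone G ar (G.tgt e.1) v₀ := tgt_mem e.2.2 e.2.1 rfl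
    have hw := hposTgt e.1 e.2.1 e.2.2 ht
    dsimp only [Term.enc, zoneTermGraph]
    by_cases hgw : Good G ar (G.tgt e.1)
    · erw [dif_pos hgw]
      exact encTgt_inl _ _ hw
    · erw [dif_neg hgw]
      exact encTgt_inr _ _ (hw ▸ hsubBad ⟨G.tgt e.1, ht⟩ hgw)
  -- lV_le
  · intro u
    dsimp only [Term.enc, zoneTermGraph]
    by_cases h : Good G ar u.1
    · erw [dif_pos h, if_pos h]
      dsimp only
      rw [hsymAt u h]
      exact le_of_eq (lV_symOf h)
    · erw [dif_neg h, if_neg h]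
  -- lE_le
  · intro e
    dsimp only [Term.enc, zoneTermGraph]
    exact le_of_eq (lE_idx e.1 e.2.1)
  -- bijective on vertices
  · constructor
    · intro u w huw
      dsimp only at huw
      by_cases hu : Good G ar u.1 <;> by_cases hw2 : Good G ar w.1
      · erw [dif_pos hu, dif_pos hw2] at huw
        exact hposInj u w (congrArg Subtype.val (Sum.inl.inj huw))
      · erw [dif_pos hu, dif_neg hw2] at huw
        exact absurd huw (by simp)
      · erw [dif_neg hu, dif_pos hw2] at huw
        exact absurd huw (by simp)
      · erw [dif_neg hu, dif_neg hw2] at huw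
        exact hname (congrArg Subtype.val (Sum.inr.inj huw))
    · intro v
      rcases v with q | q
      · obtain ⟨f, hf⟩ : ∃ f, (term name hwfc r).symAt q.1 = some f := by
          rcases hq : (term name hwfc r).symAt q.1 with _ | f
          · have h2 := q.2
            rw [hq] at h2
            exact absurd h2 (by simp)
          · exact ⟨f, rfl⟩
        obtain ⟨v', hgv, hpos, _⟩ := hAt q.1 f hf
        refine ⟨v', ?_⟩
        dsimp only
        erw [dif_pos hgv]
        exact congrArg Sum.inl (Subtype.ext hpos)
      · obtain ⟨p, hp⟩ := q.2
        obtain ⟨v', hbv, hpos, hnm⟩ := hVar p q.1 hp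
        refine ⟨v', ?_⟩
        dsimp only
        erw [dif_neg hbv]
        exact congrArg Sum.inr (Subtype.ext hnm)
  -- bijective on edges
  · constructor
    · intro e e' hee
      dsimp only at hee
      have h1 := congrArg Subtype.val hee
      dsimp only at h1
      have hp := congrArg Prod.fst h1
      have hi := congrArg Prod.snd h1
      dsimp only at hp hi
      have hsrc : (⟨G.src e.1, e.2.2⟩ : ZV ar G v₀) = ⟨G.src e'.1, e'.2.2⟩ :=
        hposInj _ _ hp
      have hsrc' : G.src e.1 = G.src e'.1 := congrArg Subtype.val hsrc
      have hl : G.lE e.1 = G.lE e'.1 := by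
        rw [lE_idx e.1 e.2.1, lE_idx e'.1 e'.2.1]
        exact congrArg (fun n : ℕ => (Flat.el (Sum.inr ⟨n + 1, Nat.succ_pos n⟩) : FlatL S)) hi
      exact Subtype.ext (edge_eq_of_label e.2.1 rfl hsrc'.symm hl)
    · rintro ⟨⟨p, i⟩, hE2⟩
      obtain ⟨f, hsf, hif⟩ := hE2
      obtain ⟨v', hgv, hpos, hsym⟩ := hAt p f hsf
      have hif' : i < ar (symOf hgv) := by rw [hsym]; exact hif
      refine ⟨⟨(outφ hgv ⟨i, hif'⟩).1, zoneEdge_out hgv ⟨i, hif'⟩,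
        by rw [(outφ hgv ⟨i, hif'⟩).2]; exact v'.2⟩, ?_⟩
      dsimp only
      apply Subtype.ext
      dsimp only
      rw [Prod.mk.injEq]
      constructor
      · refine Eq.trans (congrArg (posOf hwfp) (Subtype.ext ?_)) hpos
        exact (outφ hgv ⟨i, hif'⟩).2
      · refine label_inj (S := S) ?_
        erw [← lE_idx]
        exact lE_outφ hgv ⟨i, hif'⟩
  -- label equality on vertices
  · intro u
    dsimp only [Term.enc, zoneTermGraph]
    by_cases h : Good G ar u.1
    · erw [dif_pos h, if_pos h]
      dsimp only
      rw [hsymAt u h]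
      exact (lV_symOf h).symm
    · erw [dif_neg h, if_neg h]
  -- label equality on edges
  · intro e
    dsimp only [Term.enc, zoneTermGraph]
    exact (lE_idx e.1 e.2.1).symm
  -- root condition
  · intro r' hr'
    have hnp' : ¬ hasParent (r' : ZV ar G v₀) := by
      rintro ⟨e0, hz0, ht0⟩
      exact hr' ⟨⟨e0, hz0, src_mem hz0 (by rw [ht0]; exact r'.2)⟩, Subtype.ext ht0⟩
    have hr'r : (r' : ZV ar G v₀) = r := (rootOf_noparent hwfp hnp').symm.trans (hroot r')
    erw [hr'r, mkLIso_hom]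
    dsimp only [homV]
    by_cases hg : Good G ar r.1
    · erw [dif_pos hg]
      exact (encRoot_inl ⟨posOf hwfp r, hgoodSome r hg⟩ hpr).symm
    · erw [dif_neg hg]
      exact (encRoot_inr ⟨name r, ⟨posOf hwfp r, hsubBad r hg⟩⟩
        (by rw [← hpr]; exact hsubBad r hg)).symm

end St15

/-- Zones as term encodings. If a zone `Z` (the zone of `v₀`) of
a finite `Σ°`-labeled graph contains no directed cycle among its included
edges, then relabeling every bad vertex of `Z` with `⊥` yields a rooted graph
isomorphic to the term encoding `t°` of some linear term `t` (the isomorphism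
maps the root of the zone to the root of `t°`). -/
theorem statement_15 {S : Type} (ar : S → ℕ) (X : Type) [Infinite X]
    (G : LGraph (FlatL S)) (hfin : FiniteG G) (v₀ : G.V)
    (hacyc : ¬ ∃ u, SameZone G ar u v₀ ∧ Relation.TransGen (ZStep G ar) u u) :
    ∃ t : Term S ar X, t.Linear ∧ ∃ iso : zoneTermGraph G ar v₀ ≅ t.enc,
      ∀ r : (zoneTermGraph G ar v₀).V,
        (¬ ∃ e : (zoneTermGraph G ar v₀).E, (zoneTermGraph G ar v₀).tgt e = r) →
        homV iso.hom r = t.encRoot := by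
  exact St15.main hfin hacyc
end
end

section
/- Let ρ = l → r be a linear term rewrite rule and let m : l° ↣ G be a match morphism establishing a PBPO+ rewrite step via the rule encoding ρ° on a finite Σ°-labeled graph G. Then the image m(l°) lies in exactly one zone of G. -/
open CategoryTheory
open Classical

noncomputable section

/-! ### Auxiliary lemmas for Statement 17 -/

section Aux17

open Relation

theorem Flat.eq_el {A : Type} {a : Flat A} {c : A}
    (h1 : Flat.el c ≤ a) (h2 : a ≤ Flat.el c) : a = Flat.el c := by
  have h1' : Flat.le (Flat.el c) a := h1
  have h2' : Flat.le a (Flat.el c) := h2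
  cases a <;> simp_all [Flat.le]

theorem list_concat_inj {l1 l2 : List ℕ} {a b : ℕ} (h : l1 ++ [a] = l2 ++ [b]) :
    l1 = l2 ∧ a = b := by
  obtain ⟨h1, h2⟩ := List.append_inj' h rfl
  exact ⟨h1, by injection h2⟩

namespace Term

variable {S : Type} {ar : S → ℕ} {X : Type}

theorem sub?_isSome_of_symAt {t : Term S ar X} {p : List ℕ}
    (h : (t.symAt p).isSome) : (t.sub? p).isSome := by
  unfold Term.symAt at h
  cases hs : t.sub? p with
  | none => rw [hs] at h; simp at h
  | some s => rfl

theorem symAt_parent {t : Term S ar X} {q : List ℕ} {i : ℕ}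
    (h : (t.sub? (q ++ [i])).isSome) : ∃ g, t.symAt q = some g ∧ i < ar g := by
  rw [Term.sub?_append] at h
  cases hs : t.sub? q with
  | none => rw [hs] at h; simp at h
  | some s =>
    rw [hs] at h
    simp only [Option.bind_some] at h
    cases s with
    | var x => simp [Term.sub?] at h
    | app g ts =>
      by_cases hi : i < ar g
      · exact ⟨g, by simp [Term.symAt, hs, Term.head?], hi⟩
      · rw [show Term.sub? (.app g ts) [i] = none from by simp [Term.sub?, hi]] at h
        simp at h

theorem encTgt_eq_pos (t : Term S ar X) (e : t.encE)
    (h : (t.symAt (e.1.1 ++ [e.1.2])).isSome) :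
    t.encTgt e = Sum.inl ⟨e.1.1 ++ [e.1.2], h⟩ := by
  unfold Term.encTgt
  erw [dif_pos h]

theorem encTgt_eq_var (t : Term S ar X) (e : t.encE) {x : X}
    (hvar : t.sub? (e.1.1 ++ [e.1.2]) = some (.var x)) (hx : x ∈ t.vars) :
    t.encTgt e = Sum.inr ⟨x, hx⟩ := by
  have hn : ¬ (t.symAt (e.1.1 ++ [e.1.2])).isSome := by
    simp [Term.symAt, hvar, Term.head?]
  unfold Term.encTgt
  erw [dif_neg hn]
  have hcs := Classical.choose_spec (t.edge_tgt_var e.2 hn)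
  have h2 := hvar.symm.trans hcs
  injection h2 with h2
  injection h2 with h2
  exact congrArg Sum.inr (Subtype.ext h2.symm)

theorem encTgt_inj {t : Term S ar X} (hlin : t.Linear) {e1 e2 : t.encE}
    (h : t.encTgt e1 = t.encTgt e2) : e1 = e2 := by
  obtain ⟨⟨q1, i1⟩, he1⟩ := e1
  obtain ⟨⟨q2, i2⟩, he2⟩ := e2
  have hpos : q1 ++ [i1] = q2 ++ [i2] → (⟨(q1, i1), he1⟩ : t.encE) = ⟨(q2, i2), he2⟩ := by
    intro hq
    obtain ⟨h1, h2⟩ := list_concat_inj hq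
    subst h1; subst h2; rfl
  by_cases h1 : (t.symAt (q1 ++ [i1])).isSome <;>
    by_cases h2 : (t.symAt (q2 ++ [i2])).isSome
  · rw [t.encTgt_eq_pos ⟨(q1, i1), he1⟩ h1, t.encTgt_eq_pos ⟨(q2, i2), he2⟩ h2] at h
    injection h with h
    injection h with h
    exact hpos h
  · obtain ⟨x, hx⟩ := t.edge_tgt_var he2 h2
    rw [t.encTgt_eq_pos ⟨(q1, i1), he1⟩ h1,
      t.encTgt_eq_var ⟨(q2, i2), he2⟩ hx ⟨_, hx⟩] at h
    simp at h
  · obtain ⟨x, hx⟩ := t.edge_tgt_var he1 h1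
    rw [t.encTgt_eq_pos ⟨(q2, i2), he2⟩ h2,
      t.encTgt_eq_var ⟨(q1, i1), he1⟩ hx ⟨_, hx⟩] at h
    simp at h
  · obtain ⟨x, hx⟩ := t.edge_tgt_var he1 h1
    obtain ⟨y, hy⟩ := t.edge_tgt_var he2 h2
    rw [t.encTgt_eq_var ⟨(q1, i1), he1⟩ hx ⟨_, hx⟩,
      t.encTgt_eq_var ⟨(q2, i2), he2⟩ hy ⟨_, hy⟩] at h
    injection h with h
    have hxy : x = y := congrArg Subtype.val h
    subst hxy
    exact hpos (hlin x _ _ hx hy)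

end Term

/-- The one-vertex test graph. -/
def ptG (S : Type) : LGraph (FlatL S) where
  V := Unit
  E := Empty
  src e := e.elim
  tgt e := e.elim
  lV _ := Flat.bot
  lE e := e.elim

/-- Morphism from the point graph picking a vertex. -/
def ptHom {S : Type} (G : LGraph (FlatL S)) (v : G.V) : GLHom (ptG S) G where
  onV _ := v
  onE e := e.elim
  src_comm e := e.elim
  tgt_comm e := e.elim
  lV_le _ := Flat.bot_le _
  lE_le e := e.elim

/-- The one-edge test graph. -/
def edgeG (S : Type) : LGraph (FlatL S) where
  V := Bool
  E := Unit
  src _ := false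
  tgt _ := true
  lV _ := Flat.bot
  lE _ := Flat.bot

/-- Morphism from the edge graph picking an edge. -/
def edgeHom {S : Type} (G : LGraph (FlatL S)) (h : G.E) : GLHom (edgeG S) G where
  onV b := match b with
    | true => G.tgt h
    | false => G.src h
  onE _ := h
  src_comm _ := rfl
  tgt_comm _ := rfl
  lV_le _ := Flat.bot_le _
  lE_le _ := Flat.bot_le _

theorem mono_onE_inj {S : Type} {A B : LGraph (FlatL S)} (f : A ⟶ B) (hf : Mono f) :
    Function.Injective (GLHom.onE f) := by
  intro e1 e2 h
  have hcomp : (edgeHom A e1 : edgeG S ⟶ A) ≫ f = (edgeHom A e2 : edgeG S ⟶ A) ≫ f := by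
    apply GLHom.ext'
    · funext b
      cases b
      · show f.onV (A.src e1) = f.onV (A.src e2)
        rw [← f.src_comm, ← f.src_comm, h]
      · show f.onV (A.tgt e1) = f.onV (A.tgt e2)
        rw [← f.tgt_comm, ← f.tgt_comm, h]
    · funext _
      exact h
  have := (cancel_mono f).mp hcomp
  exact congrArg (fun g => GLHom.onE g ()) this

theorem pb_edge {S : Type} {A B C : LGraph (FlatL S)} {f : A ⟶ B} {tL : A ⟶ C} {α : B ⟶ C}
    (hpb : IsPullback (𝟙 A) f tL α) (h : B.E) (e : A.E)
    (he : GLHom.onE α h = GLHom.onE tL e) : GLHom.onE f e = h := by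
  have hcomm : (edgeHom A e : edgeG S ⟶ A) ≫ tL = (edgeHom B h : edgeG S ⟶ B) ≫ α := by
    apply GLHom.ext'
    · funext b
      cases b
      · show tL.onV (A.src e) = α.onV (B.src h)
        rw [← tL.src_comm, ← α.src_comm, he]
      · show tL.onV (A.tgt e) = α.onV (B.tgt h)
        rw [← tL.tgt_comm, ← α.tgt_comm, he]
    · funext _
      exact he.symm
  have hfst := hpb.lift_fst (edgeHom A e) (edgeHom B h) hcomm
  rw [Category.comp_id] at hfst
  have hsnd := hpb.lift_snd (edgeHom A e) (edgeHom B h) hcomm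
  rw [hfst] at hsnd
  exact congrArg (fun g => GLHom.onE g ()) hsnd

theorem main_aux {S : Type} {ar : S → ℕ} {X : Type}
    (ρ : TRSRule S ar X) (hlin : ρ.lhs.Linear)
    (G : LGraph (FlatL S)) (m : GLHom ρ.lhs.enc G)
    (α : GLHom G (ctxCC ρ.lhs.enc ρ.lhs.encRoot ρ.lhs.varHeads))
    (hmE : Function.Injective m.onE)
    (hαmV : ∀ v, α.onV (m.onV v) = Sum.inl (Sum.inl v))
    (hαmE : ∀ e, α.onE (m.onE e) = Sum.inl (Sum.inl e))
    (hpbE : ∀ (h : G.E) (e : ρ.lhs.encE), α.onE h = Sum.inl (Sum.inl e) → m.onE e = h) :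
    (∀ v w : ρ.lhs.encV, SameZone G ar (m.onV v) (m.onV w)) ∧
    (∀ e : ρ.lhs.encE, ZoneEdge G ar (m.onE e)) := by
  -- the root is a symbol vertex
  have hr : (ρ.lhs.symAt []).isSome := by
    cases hl : ρ.lhs with
    | var x => exact absurd hl (ρ.lhs_not_var x)
    | app f ts => simp [Term.symAt, Term.sub?, Term.head?]
  have hrt : ρ.lhs.encRoot = Sum.inl ⟨[], hr⟩ := by
    unfold Term.encRoot
    erw [dif_pos hr]
  -- analysis of edges of G with source in the image of m
  have src_an : ∀ (h : G.E) (p : List ℕ) (hp : (ρ.lhs.symAt p).isSome),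
      G.src h = m.onV (Sum.inl ⟨p, hp⟩) →
      ∃ e', ρ.lhs.enc.src e' = Sum.inl ⟨p, hp⟩ ∧ m.onE e' = h := by
    intro h p hp hsrc
    have hαsrc : (ctxCC ρ.lhs.enc ρ.lhs.encRoot ρ.lhs.varHeads).src (α.onE h)
        = Sum.inl (Sum.inl (Sum.inl ⟨p, hp⟩)) := by
      erw [α.src_comm, hsrc, hαmV]; rfl
    rcases hw : α.onE h with (e' | (x' | x')) | b <;> rw [hw] at hαsrc
    · refine ⟨e', ?_, hpbE h e' hw⟩
      simp [ctxCC, upperCC, lowerCC] at hαsrc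
      injection hαsrc with h1; injection h1 with h2
    · obtain ⟨xv, ⟨y, hy⟩⟩ := x'
      simp [ctxCC, upperCC, lowerCC, ← hy] at hαsrc
      injection hαsrc with h1; injection h1 with h2; injection h2
    · simp [ctxCC, upperCC, lowerCC] at hαsrc
      injection hαsrc with h1; injection h1
    · simp [ctxCC, upperCC, lowerCC] at hαsrc
  -- analysis of edges of G with target in the image of m (away from the root)
  have tgt_an : ∀ (h : G.E) (w : ρ.lhs.encV), w ≠ ρ.lhs.encRoot →
      G.tgt h = m.onV w → ∃ e', ρ.lhs.enc.tgt e' = w ∧ m.onE e' = h := by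
    intro h w hne htgt
    have hαtgt : (ctxCC ρ.lhs.enc ρ.lhs.encRoot ρ.lhs.varHeads).tgt (α.onE h)
        = Sum.inl (Sum.inl w) := by
      erw [α.tgt_comm, htgt, hαmV]; rfl
    rcases hw : α.onE h with (e' | (x' | x')) | b <;> rw [hw] at hαtgt
    · refine ⟨e', ?_, hpbE h e' hw⟩
      simp [ctxCC, upperCC, lowerCC] at hαtgt
      injection hαtgt with h1; injection h1 with h2
    · simp [ctxCC, upperCC, lowerCC] at hαtgt
      injection hαtgt with h1; injection h1
    · simp [ctxCC, upperCC, lowerCC] at hαtgt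
      injection hαtgt with h1; injection h1
    · cases b
      · simp [ctxCC, upperCC, lowerCC] at hαtgt
      · have : ρ.lhs.encRoot = w := by
          simp [ctxCC, upperCC, lowerCC] at hαtgt
          injection hαtgt with h1; injection h1 with h2
        exact absurd this.symm hne
  -- the image of every symbol vertex is good
  have good_im : ∀ (p : List ℕ) (hp : (ρ.lhs.symAt p).isSome),
      Good G ar (m.onV (Sum.inl ⟨p, hp⟩)) := by
    intro p hp
    obtain ⟨f, hf⟩ : ∃ f, ρ.lhs.symAt p = some f := ⟨_, (Option.some_get hp).symm⟩
    have hnotvar : (Sum.inl ⟨p, hp⟩ : ρ.lhs.encV) ∉ ρ.lhs.varHeads := by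
      rintro ⟨y, hy⟩
      cases hy
    have hencl : ρ.lhs.enc.lV (Sum.inl ⟨p, hp⟩) = Flat.el (Sum.inl f) := by
      simp [Term.enc, hf]
    have hlab : G.lV (m.onV (Sum.inl ⟨p, hp⟩)) = Flat.el (Sum.inl f) := by
      apply Flat.eq_el
      · rw [← hencl]; exact m.lV_le _
      · have h1 := α.lV_le (m.onV (Sum.inl ⟨p, hp⟩))
        erw [hαmV] at h1
        have h2 : (ctxCC ρ.lhs.enc ρ.lhs.encRoot ρ.lhs.varHeads).lV
            (Sum.inl (Sum.inl (Sum.inl ⟨p, hp⟩))) = Flat.el (Sum.inl f) := by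
          refine (ctxCC_lV_inl ρ.lhs.enc ρ.lhs.encRoot ρ.lhs.varHeads
            (Sum.inl ⟨p, hp⟩)).trans ?_
          exact (if_neg hnotvar).trans hencl
        erw [h2] at h1
        exact h1
    constructor
    · -- OutWF
      refine ⟨f, hlab, ?_⟩
      let toFun : Fin (ar f) → {h : G.E // G.src h = m.onV (Sum.inl ⟨p, hp⟩)} :=
        fun i => ⟨m.onE ⟨(p, i.1), ⟨f, hf, i.2⟩⟩, by erw [m.src_comm]; rfl⟩
      have hbij : Function.Bijective toFun := by
        constructor
        · intro i j hij
          have h1 : m.onE ⟨(p, i.1), ⟨f, hf, i.2⟩⟩ = m.onE ⟨(p, j.1), ⟨f, hf, j.2⟩⟩ :=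
            congrArg Subtype.val hij
          have h2 := hmE h1
          have h3 : ((p, i.1) : List ℕ × ℕ) = (p, j.1) := congrArg Subtype.val h2
          exact Fin.ext (congrArg Prod.snd h3)
        · rintro ⟨h, hs⟩
          rcases src_an h p hp hs with ⟨⟨⟨q, j⟩, hqe⟩, hsrc', hme⟩
          have hq : q = p := by
            have := congrArg (fun z => match z with
              | Sum.inl u => u.1
              | Sum.inr _ => ([] : List ℕ)) hsrc'
            simpa [Term.enc] using this
          subst hq
          obtain ⟨g, hg, hj⟩ := hqe
          have hgf : g = f := by
            rw [hg] at hf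
            injection hf
          subst hgf
          exact ⟨⟨j, hj⟩, Subtype.ext hme⟩
      refine ⟨Equiv.ofBijective toFun hbij, ?_⟩
      intro i
      have key : G.lE (m.onE ⟨(p, i.1), ⟨f, hf, i.2⟩⟩)
          = Flat.el (Sum.inr ⟨(i : ℕ) + 1, Nat.succ_pos _⟩) := by
        apply Flat.eq_el
        · have h0 := m.lE_le ⟨(p, i.1), ⟨f, hf, i.2⟩⟩
          exact h0
        · have h1 := α.lE_le (m.onE ⟨(p, i.1), ⟨f, hf, i.2⟩⟩)
          erw [hαmE] at h1
          exact h1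
      exact key
    · -- children are in-well-formed
      intro h hs
      rcases src_an h p hp hs with ⟨e', _, hme⟩
      have htw : G.tgt h = m.onV (ρ.lhs.enc.tgt e') := by
        rw [← hme, m.tgt_comm]
      have hne : ρ.lhs.enc.tgt e' ≠ ρ.lhs.encRoot := by
        rw [hrt]
        obtain ⟨⟨q, j⟩, hqe⟩ := e'
        show ρ.lhs.encTgt _ ≠ _
        by_cases hts : (ρ.lhs.symAt (q ++ [j])).isSome
        · rw [ρ.lhs.encTgt_eq_pos ⟨(q, j), hqe⟩ hts]
          intro hcon
          injection hcon with hcon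
          have : q ++ [j] = [] := congrArg Subtype.val hcon
          simp at this
        · obtain ⟨x, hx⟩ := ρ.lhs.edge_tgt_var hqe hts
          rw [ρ.lhs.encTgt_eq_var ⟨(q, j), hqe⟩ hx ⟨_, hx⟩]
          intro hcon; cases hcon
      intro h1 h2 ht1 ht2
      rw [htw] at ht1 ht2
      rcases tgt_an h1 _ hne ht1 with ⟨e1, he1, hm1⟩
      rcases tgt_an h2 _ hne ht2 with ⟨e2, he2, hm2⟩
      have : e1 = e2 := Term.encTgt_inj hlin (he1.trans he2.symm)
      rw [← hm1, ← hm2, this]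
  -- every image edge is a zone edge
  have zedge : ∀ e : ρ.lhs.encE, ZoneEdge G ar (m.onE e) := by
    intro e
    show Good G ar (G.src (m.onE e))
    erw [m.src_comm]
    exact good_im e.1.1 _
  have zstep : ∀ e : ρ.lhs.encE,
      ZStep G ar (m.onV (ρ.lhs.enc.src e)) (m.onV (ρ.lhs.enc.tgt e)) :=
    fun e => ⟨m.onE e, zedge e, m.src_comm e, m.tgt_comm e⟩
  -- every symbol vertex is in the zone of the root
  have symzone : ∀ (p : List ℕ) (hp : (ρ.lhs.symAt p).isSome),
      SameZone G ar (m.onV (Sum.inl ⟨p, hp⟩)) (m.onV ρ.lhs.encRoot) := by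
    intro p
    induction p using List.reverseRecOn with
    | nil =>
      intro hp
      rw [hrt]
      exact Relation.EqvGen.refl _
    | append_singleton q i ih =>
      intro hp
      have hsub : (ρ.lhs.sub? (q ++ [i])).isSome := Term.sub?_isSome_of_symAt hp
      obtain ⟨g, hg, hi⟩ := Term.symAt_parent hsub
      have hgs : (ρ.lhs.symAt q).isSome := by rw [hg]; rfl
      have hz := zstep ⟨(q, i), ⟨g, hg, hi⟩⟩
      have htgt : ρ.lhs.enc.tgt ⟨(q, i), ⟨g, hg, hi⟩⟩ = Sum.inl ⟨q ++ [i], hp⟩ :=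
        ρ.lhs.encTgt_eq_pos ⟨(q, i), ⟨g, hg, hi⟩⟩ hp
      rw [htgt] at hz
      exact Relation.EqvGen.trans _ _ _
        (Relation.EqvGen.symm _ _ (Relation.EqvGen.rel _ _ hz)) (ih hgs)
  have varzone : ∀ (x : X) (hx : x ∈ ρ.lhs.vars),
      SameZone G ar (m.onV (Sum.inr ⟨x, hx⟩)) (m.onV ρ.lhs.encRoot) := by
    intro x hx
    have hx' := hx
    obtain ⟨p, hp⟩ := hx'
    obtain rfl | ⟨q, i, rfl⟩ : p = [] ∨ ∃ q i, p = q ++ [i] := by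
      rcases List.eq_nil_or_concat p with h | ⟨q, a, h⟩
      · exact Or.inl h
      · exact Or.inr ⟨q, a, by rw [h, List.concat_eq_append]⟩
    · simp only [Term.sub?, Option.some.injEq] at hp
      exact absurd hp (ρ.lhs_not_var x)
    · have hsub : (ρ.lhs.sub? (q ++ [i])).isSome := by rw [hp]; rfl
      obtain ⟨g, hg, hi⟩ := Term.symAt_parent hsub
      have hgs : (ρ.lhs.symAt q).isSome := by rw [hg]; rfl
      have hz := zstep ⟨(q, i), ⟨g, hg, hi⟩⟩
      have htgt : ρ.lhs.enc.tgt ⟨(q, i), ⟨g, hg, hi⟩⟩ = Sum.inr ⟨x, hx⟩ :=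
        ρ.lhs.encTgt_eq_var ⟨(q, i), ⟨g, hg, hi⟩⟩ hp hx
      rw [htgt] at hz
      exact Relation.EqvGen.trans _ _ _
        (Relation.EqvGen.symm _ _ (Relation.EqvGen.rel _ _ hz)) (symzone q hgs)
  have claim : ∀ v : ρ.lhs.encV, SameZone G ar (m.onV v) (m.onV ρ.lhs.encRoot) := by
    rintro (⟨p, hp⟩ | ⟨x, hx⟩)
    · exact symzone p hp
    · exact varzone x hx
  exact ⟨fun v w => Relation.EqvGen.trans _ _ _ (claim v)
    (Relation.EqvGen.symm _ _ (claim w)), zedge⟩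

end Aux17

/-- Matches respect zone boundaries. The image `m(l°)` of a match
morphism `m : l° ↣ G` establishing a PBPO⁺ rewrite step via the rule encoding
`ρ°` of a linear term rewrite rule on a finite `Σ°`-labeled graph `G` lies in
exactly one zone of `G`. -/
theorem statement_17 {S : Type} {ar : S → ℕ} {X : Type}
    (ρ : TRSRule S ar X) (hρ : ρ.Linear) (G H : LGraph (FlatL S))
    (hfin : FiniteG G) (st : RewriteStep (ruleEnc ρ) G H) :
    (∀ v w : (ruleEnc ρ).L.V, SameZone G ar (homV st.m v) (homV st.m w)) ∧
    (∀ e : (ruleEnc ρ).L.E, ZoneEdge G ar (homE st.m e)) := by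
  have hw := st.matchPB.w
  have hαm : st.m ≫ st.α = (ruleEnc ρ).tL := by
    rw [← hw, Category.id_comp]
  have hαmV : ∀ v, st.α.onV (st.m.onV v) = Sum.inl (Sum.inl v) :=
    fun v => congrFun (congrArg GLHom.onV hαm) v
  have hαmE : ∀ e, st.α.onE (st.m.onE e) = Sum.inl (Sum.inl e) :=
    fun e => congrFun (congrArg GLHom.onE hαm) e
  have hmE : Function.Injective st.m.onE := mono_onE_inj st.m st.mono_m
  have hpbE : ∀ (h : G.E) (e : ρ.lhs.encE),
      st.α.onE h = Sum.inl (Sum.inl e) → st.m.onE e = h :=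
    fun h e he => pb_edge st.matchPB h e he
  exact main_aux ρ hρ.1 G st.m st.α hmE hαmV hαmE hpbE
end
end
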